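/- Local average potential outcomes under one-sided noncompliance, part II: under Assumptions 1, 2 and 4, E[Y(0,0) · 1_{C_i}] = E[Y | Z_i=0, Z_j=0] − E[Y · (1−D_i) | Z_i=1, Z_j=0] and E[Y(0,0) · 1_{C_j}] = E[Y | Z_i=0, Z_j=0] − E[Y · (1−D_j) | Z_i=0, Z_j=1], where 1_A denotes the indicator of the event A. -/

import Mathlib

open MeasureTheory ProbabilityTheory

noncomputable def bInd (b : Bool) : ℝ := if b then 1 else 0

lemma aux_cond_ae_mem {Ω : Type*} [MeasurableSpace Ω] (P : Measure Ω)
    {t : Set Ω} (ht : MeasurableSet t) : ∀ᵐ ω ∂(P[|t]), ω ∈ t := by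
  refine MeasureTheory.mem_ae_iff.mpr ?_
  have : P[|t] tᶜ = (P t)⁻¹ * P (t ∩ tᶜ) := cond_apply ht P tᶜ
  simpa [Set.inter_compl_self] using this

lemma aux_cond_integral_of_indep {Ω : Type*} [MeasurableSpace Ω] (P : Measure Ω)
    [IsProbabilityMeasure P]
    {X : Ω → ℝ} {Z : Ω → Bool × Bool} (hZ : Measurable Z) (hX : Integrable X P)
    (hind : IndepFun X Z P) (s : Set (Bool × Bool)) (hpos : 0 < P (Z ⁻¹' s)) :
    ∫ ω, X ω ∂(P[|Z ⁻¹' s]) = ∫ ω, X ω ∂P := by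
  classical
  have hms : MeasurableSet s := (Set.toFinite s).measurableSet
  have ht : MeasurableSet (Z ⁻¹' s) := hZ hms
  have hne : P (Z ⁻¹' s) ≠ 0 := hpos.ne'
  have hfin : P (Z ⁻¹' s) ≠ ⊤ := measure_ne_top P _
  set g : Bool × Bool → ℝ := fun z => if z ∈ s then 1 else 0 with hg
  have hgm : Measurable g := measurable_of_countable g
  have hgeq : (fun ω => g (Z ω)) = (Z ⁻¹' s).indicator (fun _ => (1:ℝ)) := by
    funext ω
    by_cases h : Z ω ∈ s
    · rw [Set.indicator_of_mem (Set.mem_preimage.mpr h)]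
      exact if_pos h
    · rw [Set.indicator_of_notMem (fun hc => h (Set.mem_preimage.mp hc))]
      exact if_neg h
  have hindg : IndepFun X (g ∘ Z) P := hind.comp measurable_id hgm
  have hgZint : Integrable (g ∘ Z) P := by
    have h1 : Integrable ((Z ⁻¹' s).indicator (fun _ => (1:ℝ))) P :=
      (integrable_const (1:ℝ)).indicator ht
    simpa [Function.comp_def, hgeq] using h1
  have hrestrict : ∫ ω, X ω ∂(P.restrict (Z ⁻¹' s)) =
      (∫ ω, X ω ∂P) * (P (Z ⁻¹' s)).toReal := by
    have h2 : ∫ ω, X ω ∂(P.restrict (Z ⁻¹' s)) = ∫ ω, X ω * g (Z ω) ∂P := by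
      rw [← integral_indicator ht]
      congr 1; funext ω
      by_cases h : Z ω ∈ s
      · rw [Set.indicator_of_mem (Set.mem_preimage.mpr h)]
        simp only [hg]; rw [if_pos h, mul_one]
      · rw [Set.indicator_of_notMem (fun hc => h (Set.mem_preimage.mp hc))]
        simp only [hg]; rw [if_neg h, mul_zero]
    have h3 : ∫ ω, X ω * (g ∘ Z) ω ∂P = (∫ ω, X ω ∂P) * ∫ ω, (g ∘ Z) ω ∂P :=
      hindg.integral_mul_eq_mul_integral hX.aestronglyMeasurable hgZint.aestronglyMeasurable
    simp only [Function.comp_apply] at h3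
    have h4 : ∫ ω, g (Z ω) ∂P = (P (Z ⁻¹' s)).toReal := by
      calc ∫ ω, g (Z ω) ∂P = ∫ ω, (Z ⁻¹' s).indicator (fun _ => (1:ℝ)) ω ∂P := by
            rw [hgeq]
        _ = (P (Z ⁻¹' s)).toReal := by
            rw [integral_indicator_const (1:ℝ) ht, smul_eq_mul, mul_one]; rfl
    rw [h2, h3, h4]
  have htr : (P (Z ⁻¹' s)).toReal ≠ 0 := ENNReal.toReal_ne_zero.mpr ⟨hne, hfin⟩
  rw [ProbabilityTheory.cond, integral_smul_measure, hrestrict, smul_eq_mul,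
    ENNReal.toReal_inv]
  field_simp

theorem stmt_7
    {Ω : Type*} [MeasurableSpace Ω] (P : Measure Ω) [IsProbabilityMeasure P]
    (Y : Bool → Bool → Ω → ℝ) (Di Dj : Bool → Bool → Ω → Bool)
    (Zi Zj : Ω → Bool)
    (hYmeas : ∀ d d', Measurable (Y d d'))
    (hYint : ∀ d d', Integrable (Y d d') P)
    (hDimeas : ∀ z z', Measurable (Di z z'))
    (hDjmeas : ∀ z z', Measurable (Dj z z'))
    (hZi : Measurable Zi) (hZj : Measurable Zj)
    (hpos : ∀ z z', 0 < P ({x | Zi x = z} ∩ {x | Zj x = z'}))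
    (hIV : IndepFun
      (fun ω => ((fun d d' => Y d d' ω),
                 (fun z z' => Di z z' ω),
                 (fun z z' => Dj z z' ω)))
      (fun ω => (Zi ω, Zj ω)) P)
    (hmono : ∀ᵐ ω ∂P,
      (Di false false ω ≤ Di false true ω ∧ Di false true ω ≤ Di true false ω ∧
        Di true false ω ≤ Di true true ω) ∧
      (Dj false false ω ≤ Dj false true ω ∧ Dj false true ω ≤ Dj true false ω ∧
        Dj true false ω ≤ Dj true true ω))
    (hosn : ∀ᵐ ω ∂P,
      Di false false ω = false ∧ Di false true ω = false ∧
      Dj false false ω = false ∧ Dj false true ω = false)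
    :
    (∫ ω, Y false false ω * Set.indicator ({x | Di true false x = true ∧ Di false true x = false}) (fun _ => (1:ℝ)) ω ∂P)
      = (∫ ω, (Y (Di (Zi ω) (Zj ω) ω) (Dj (Zj ω) (Zi ω) ω) ω) ∂(P[|({x | Zi x = false} ∩ {x | Zj x = false})])) - (∫ ω, (Y (Di (Zi ω) (Zj ω) ω) (Dj (Zj ω) (Zi ω) ω) ω) * (1 - bInd (Di (Zi ω) (Zj ω) ω)) ∂(P[|({x | Zi x = true} ∩ {x | Zj x = false})]))
    ∧ (∫ ω, Y false false ω * Set.indicator ({x | Dj true false x = true ∧ Dj false true x = false}) (fun _ => (1:ℝ)) ω ∂P)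
      = (∫ ω, (Y (Di (Zi ω) (Zj ω) ω) (Dj (Zj ω) (Zi ω) ω) ω) ∂(P[|({x | Zi x = false} ∩ {x | Zj x = false})])) - (∫ ω, (Y (Di (Zi ω) (Zj ω) ω) (Dj (Zj ω) (Zi ω) ω) ω) * (1 - bInd (Dj (Zj ω) (Zi ω) ω)) ∂(P[|({x | Zi x = false} ∩ {x | Zj x = true})])) := by
  classical
  set Z : Ω → Bool × Bool := fun ω => (Zi ω, Zj ω) with hZdef
  have hZ : Measurable Z := hZi.prodMk hZj
  -- sets as preimages
  have hset : ∀ z z' : Bool, {x | Zi x = z} ∩ {x | Zj x = z'} = Z ⁻¹' {(z, z')} := by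
    intro z z'; ext ω; simp [hZdef, Prod.ext_iff, Set.mem_setOf_eq]
  have hposZ : ∀ z z' : Bool, 0 < P (Z ⁻¹' {(z, z')}) := by
    intro z z'; rw [← hset]; exact hpos z z'
  -- the big bundle
  set W : Ω → ((Bool → Bool → ℝ) × (Bool → Bool → Bool) × (Bool → Bool → Bool)) :=
    fun ω => ((fun d d' => Y d d' ω), (fun z z' => Di z z' ω), (fun z z' => Dj z z' ω))
    with hWdef
  -- independence transfer
  have hindep : ∀ (g : ((Bool → Bool → ℝ) × (Bool → Bool → Bool) × (Bool → Bool → Bool)) → ℝ),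
      Measurable g → IndepFun (fun ω => g (W ω)) Z P := by
    intro g hg
    exact hIV.comp hg measurable_id
  -- the functions
  set X1 : Ω → ℝ := fun ω => Y false false ω with hX1def
  set X2 : Ω → ℝ := fun ω => if Di true false ω = true then 0 else Y false false ω with hX2def
  set X3 : Ω → ℝ := fun ω => if Dj true false ω = true then 0 else Y false false ω with hX3def
  have hX1int : Integrable X1 P := hYint false false
  have hX2int : Integrable X2 P := by
    have h := (hYint false false).indicator
      ((hDimeas true false) (measurableSet_singleton false))
    refine h.congr (Filter.Eventually.of_forall fun ω => ?_)
    by_cases h1 : Di true false ω = true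
    · simp [hX2def, h1, Set.indicator_apply, Set.mem_preimage]
    · simp only [Bool.not_eq_true] at h1
      simp [hX2def, h1, Set.indicator_apply, Set.mem_preimage]
  have hX3int : Integrable X3 P := by
    have h := (hYint false false).indicator
      ((hDjmeas true false) (measurableSet_singleton false))
    refine h.congr (Filter.Eventually.of_forall fun ω => ?_)
    by_cases h1 : Dj true false ω = true
    · simp [hX3def, h1, Set.indicator_apply, Set.mem_preimage]
    · simp only [Bool.not_eq_true] at h1
      simp [hX3def, h1, Set.indicator_apply, Set.mem_preimage]
  -- independence for each
  have hind1 : IndepFun X1 Z P := by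
    have hg : Measurable (fun p : ((Bool → Bool → ℝ) × (Bool → Bool → Bool) × (Bool → Bool → Bool)) => p.1 false false) :=
      (measurable_pi_apply false).comp ((measurable_pi_apply false).comp measurable_fst)
    exact hindep _ hg
  have hind2 : IndepFun X2 Z P := by
    have hg : Measurable (fun p : ((Bool → Bool → ℝ) × (Bool → Bool → Bool) × (Bool → Bool → Bool)) =>
        if p.2.1 true false = true then (0:ℝ) else p.1 false false) := by
      have h1 : Measurable (fun p : ((Bool → Bool → ℝ) × (Bool → Bool → Bool) × (Bool → Bool → Bool)) => p.2.1 true false) :=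
        (measurable_pi_apply false).comp ((measurable_pi_apply true).comp
          (measurable_fst.comp measurable_snd))
      have h2 : Measurable (fun p : ((Bool → Bool → ℝ) × (Bool → Bool → Bool) × (Bool → Bool → Bool)) => p.1 false false) :=
        (measurable_pi_apply false).comp ((measurable_pi_apply false).comp measurable_fst)
      exact Measurable.ite (h1 (measurableSet_singleton true)) measurable_const h2
    exact hindep _ hg
  have hind3 : IndepFun X3 Z P := by
    have hg : Measurable (fun p : ((Bool → Bool → ℝ) × (Bool → Bool → Bool) × (Bool → Bool → Bool)) =>
        if p.2.2 true false = true then (0:ℝ) else p.1 false false) := by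
      have h1 : Measurable (fun p : ((Bool → Bool → ℝ) × (Bool → Bool → Bool) × (Bool → Bool → Bool)) => p.2.2 true false) :=
        (measurable_pi_apply false).comp ((measurable_pi_apply true).comp
          (measurable_snd.comp measurable_snd))
      have h2 : Measurable (fun p : ((Bool → Bool → ℝ) × (Bool → Bool → Bool) × (Bool → Bool → Bool)) => p.1 false false) :=
        (measurable_pi_apply false).comp ((measurable_pi_apply false).comp measurable_fst)
      exact Measurable.ite (h1 (measurableSet_singleton true)) measurable_const h2
    exact hindep _ hg
  -- measurability of preimage sets
  have hms : ∀ z z' : Bool, MeasurableSet (Z ⁻¹' ({(z, z')} : Set (Bool × Bool))) :=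
    fun z z' => hZ (measurableSet_singleton _)
  -- ae transfer to conditional measures
  have hosn_cond : ∀ (t : Set Ω), ∀ᵐ ω ∂(P[|t]),
      Di false false ω = false ∧ Di false true ω = false ∧
      Dj false false ω = false ∧ Dj false true ω = false := by
    intro t
    exact hosn.filter_mono cond_absolutelyContinuous.ae_le
  -- Term A
  have hA : (∫ ω, (Y (Di (Zi ω) (Zj ω) ω) (Dj (Zj ω) (Zi ω) ω) ω)
      ∂(P[|({x | Zi x = false} ∩ {x | Zj x = false})])) = ∫ ω, X1 ω ∂P := by
    rw [hset false false]
    have hmem := aux_cond_ae_mem P (hms false false)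
    have hae : (fun ω => Y (Di (Zi ω) (Zj ω) ω) (Dj (Zj ω) (Zi ω) ω) ω)
        =ᵐ[P[|Z ⁻¹' {(false, false)}]] X1 := by
      filter_upwards [hmem, hosn_cond _] with ω hm ho
      have hzi : Zi ω = false := by
        have := Set.mem_preimage.mp hm
        simp only [Set.mem_singleton_iff, hZdef, Prod.ext_iff] at this
        exact this.1
      have hzj : Zj ω = false := by
        have := Set.mem_preimage.mp hm
        simp only [Set.mem_singleton_iff, hZdef, Prod.ext_iff] at this
        exact this.2
      simp [hzi, hzj, ho.1, ho.2.2.1, hX1def]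
    rw [integral_congr_ae hae]
    exact aux_cond_integral_of_indep P hZ hX1int hind1 _ (hposZ false false)
  -- Term B (i part)
  have hB : (∫ ω, (Y (Di (Zi ω) (Zj ω) ω) (Dj (Zj ω) (Zi ω) ω) ω) *
      (1 - bInd (Di (Zi ω) (Zj ω) ω)) ∂(P[|({x | Zi x = true} ∩ {x | Zj x = false})]))
      = ∫ ω, X2 ω ∂P := by
    rw [hset true false]
    have hmem := aux_cond_ae_mem P (hms true false)
    have hae : (fun ω => Y (Di (Zi ω) (Zj ω) ω) (Dj (Zj ω) (Zi ω) ω) ω *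
        (1 - bInd (Di (Zi ω) (Zj ω) ω)))
        =ᵐ[P[|Z ⁻¹' {(true, false)}]] X2 := by
      filter_upwards [hmem, hosn_cond _] with ω hm ho
      have hz : Zi ω = true ∧ Zj ω = false := by
        have := Set.mem_preimage.mp hm
        simpa only [Set.mem_singleton_iff, hZdef, Prod.ext_iff] using this
      cases hd : Di true false ω
      · simp [hz.1, hz.2, ho.2.2.2, hd, bInd, hX2def]
      · simp [hz.1, hz.2, ho.2.2.2, hd, bInd, hX2def]
    rw [integral_congr_ae hae]
    exact aux_cond_integral_of_indep P hZ hX2int hind2 _ (hposZ true false)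
  -- Term B (j part)
  have hC : (∫ ω, (Y (Di (Zi ω) (Zj ω) ω) (Dj (Zj ω) (Zi ω) ω) ω) *
      (1 - bInd (Dj (Zj ω) (Zi ω) ω)) ∂(P[|({x | Zi x = false} ∩ {x | Zj x = true})]))
      = ∫ ω, X3 ω ∂P := by
    rw [hset false true]
    have hmem := aux_cond_ae_mem P (hms false true)
    have hae : (fun ω => Y (Di (Zi ω) (Zj ω) ω) (Dj (Zj ω) (Zi ω) ω) ω *
        (1 - bInd (Dj (Zj ω) (Zi ω) ω)))
        =ᵐ[P[|Z ⁻¹' {(false, true)}]] X3 := by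
      filter_upwards [hmem, hosn_cond _] with ω hm ho
      have hz : Zi ω = false ∧ Zj ω = true := by
        have := Set.mem_preimage.mp hm
        simpa only [Set.mem_singleton_iff, hZdef, Prod.ext_iff] using this
      cases hd : Dj true false ω
      · simp [hz.1, hz.2, ho.2.1, hd, bInd, hX3def]
      · simp [hz.1, hz.2, ho.2.1, hd, bInd, hX3def]
    rw [integral_congr_ae hae]
    exact aux_cond_integral_of_indep P hZ hX3int hind3 _ (hposZ false true)
  constructor
  · rw [hA, hB, ← integral_sub hX1int hX2int]
    refine integral_congr_ae ?_
    filter_upwards [hosn] with ω ho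
    cases hd : Di true false ω
    · have : ω ∉ {x | Di true false x = true ∧ Di false true x = false} := by
        simp [hd]
      simp [Set.indicator_of_notMem this, hX1def, hX2def, hd]
    · have : ω ∈ {x | Di true false x = true ∧ Di false true x = false} := ⟨hd, ho.2.1⟩
      simp [Set.indicator_of_mem this, hX1def, hX2def, hd]
  · rw [hA, hC, ← integral_sub hX1int hX3int]
    refine integral_congr_ae ?_
    filter_upwards [hosn] with ω ho
    cases hd : Dj true false ω
    · have : ω ∉ {x | Dj true false x = true ∧ Dj false true x = false} := by
        simp [hd]
      simp [Set.indicator_of_notMem this, hX1def, hX3def, hd]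
    · have : ω ∈ {x | Dj true false x = true ∧ Dj false true x = false} := ⟨hd, ho.2.2.2⟩
      simp [Set.indicator_of_mem this, hX1def, hX3def, hd]
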